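/- Let V be finite with distinct positions and capacities, and suppose |S⁺(u)| ≤ k and |P⁺(u)| ≤ k for all u ∈ V. Then the diameter of the CONE graph G^CONE is at most 2k, where edges are (u,v) with v ∈ S⁺(u) ∪ P⁺(u) ∪ S⁻(u) ∪ P⁻(u). -/

import Mathlib

/-- `IsSucc h c u v` means `v = succ⁺₁(u)`. -/
def IsSucc {V : Type*} (h c : V → ℝ) (u v : V) : Prop :=
  h u < h v ∧ c u < c v ∧ ∀ w, h u < h w → c u < c w → h v ≤ h w

/-- `IsPred h c v u` means `u = pred⁺₁(v)`. -/
def IsPred {V : Type*} (h c : V → ℝ) (v u : V) : Prop :=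
  h u < h v ∧ c v < c u ∧ ∀ w, h w < h v → c v < c w → h w ≤ h u

/-- The (undirected) CONE graph: `u ~ v` iff `v ∈ S⁺(u) ∪ P⁺(u) ∪ S⁻(u) ∪ P⁻(u)`. -/
def coneGraph {V : Type*} (h c : V → ℝ) : SimpleGraph V where
  Adj u v := u ≠ v ∧ (Relation.TransGen (IsSucc h c) u v ∨
    Relation.TransGen (IsSucc h c) v u ∨
    Relation.TransGen (IsPred h c) u v ∨
    Relation.TransGen (IsPred h c) v u)
  symm := by
    constructor
    rintro a b ⟨hne, hr⟩
    exact ⟨hne.symm, by tauto⟩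
  loopless := by
    constructor
    rintro a ⟨hne, -⟩
    exact hne rfl

lemma exists_succ {V : Type*} [Fintype V] (h c : V → ℝ) (u : V)
    (hw : ∃ w, h u < h w ∧ c u < c w) : ∃ v, IsSucc h c u v := by
  obtain ⟨w, hw1, hw2⟩ := hw
  obtain ⟨v, hv, hmin⟩ := Finset.exists_min_image
    (Finset.univ.filter (fun x => h u < h x ∧ c u < c x)) h
    ⟨w, by simp [hw1, hw2]⟩
  simp only [Finset.mem_filter, Finset.mem_univ, true_and] at hv
  exact ⟨v, hv.1, hv.2, fun x hx1 hx2 => hmin x (by simp [hx1, hx2])⟩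

lemma exists_pred {V : Type*} [Fintype V] (h c : V → ℝ) (u : V)
    (hw : ∃ w, h w < h u ∧ c u < c w) : ∃ v, IsPred h c u v := by
  obtain ⟨w, hw1, hw2⟩ := hw
  obtain ⟨v, hv, hmax⟩ := Finset.exists_max_image
    (Finset.univ.filter (fun x => h x < h u ∧ c u < c x)) h
    ⟨w, by simp [hw1, hw2]⟩
  simp only [Finset.mem_filter, Finset.mem_univ, true_and] at hv
  exact ⟨v, hv.1, hv.2, fun x hx1 hx2 => hmax x (by simp [hx1, hx2])⟩

lemma chain_succ {V : Type*} [Fintype V] (h c : V → ℝ)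
    (hinj : Function.Injective h) (cinj : Function.Injective c)
    (m : V) (hm : ∀ w, c w ≤ c m) :
    ∀ u, h u < h m → Relation.TransGen (IsSucc h c) u m := by
  have key : ∀ n : ℕ, ∀ u, (Finset.univ.filter (fun w => h u < h w)).card ≤ n →
      h u < h m → Relation.TransGen (IsSucc h c) u m := by
    intro n
    induction n with
    | zero =>
      intro u hcard hlt
      exfalso
      have : 0 < (Finset.univ.filter (fun w => h u < h w)).card :=
        Finset.card_pos.mpr ⟨m, by simp [hlt]⟩
      omega
    | succ n ih =>
      intro u hcard hlt
      have hune : u ≠ m := fun e => absurd (e ▸ hlt) (lt_irrefl _)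
      have hcu : c u < c m := lt_of_le_of_ne (hm u) (fun e => hune (cinj e))
      obtain ⟨v, hv⟩ := exists_succ h c u ⟨m, hlt, hcu⟩
      by_cases hvm : v = m
      · exact hvm ▸ Relation.TransGen.single hv
      · have hvle : h v ≤ h m := hv.2.2 m hlt hcu
        have hvlt : h v < h m := lt_of_le_of_ne hvle (fun e => hvm (hinj e))
        have hsub : (Finset.univ.filter (fun w => h v < h w)) ⊂
            (Finset.univ.filter (fun w => h u < h w)) := by
          constructor
          · intro x hx
            simp only [Finset.mem_filter, Finset.mem_univ, true_and] at hx ⊢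
            exact hv.1.trans hx
          · intro hss
            have := hss (by simp [hv.1] : v ∈ Finset.univ.filter (fun w => h u < h w))
            simp at this
        have hc2 : (Finset.univ.filter (fun w => h v < h w)).card ≤ n := by
          have := Finset.card_lt_card hsub
          omega
        exact (ih v hc2 hvlt).head hv
  intro u; exact key _ u le_rfl

lemma chain_pred {V : Type*} [Fintype V] (h c : V → ℝ)
    (hinj : Function.Injective h) (cinj : Function.Injective c)
    (m : V) (hm : ∀ w, c w ≤ c m) :
    ∀ u, h m < h u → Relation.TransGen (IsPred h c) u m := by
  have key : ∀ n : ℕ, ∀ u, (Finset.univ.filter (fun w => h w < h u)).card ≤ n →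
      h m < h u → Relation.TransGen (IsPred h c) u m := by
    intro n
    induction n with
    | zero =>
      intro u hcard hlt
      exfalso
      have : 0 < (Finset.univ.filter (fun w => h w < h u)).card :=
        Finset.card_pos.mpr ⟨m, by simp [hlt]⟩
      omega
    | succ n ih =>
      intro u hcard hlt
      have hune : u ≠ m := fun e => absurd (e ▸ hlt) (lt_irrefl _)
      have hcu : c u < c m := lt_of_le_of_ne (hm u) (fun e => hune (cinj e))
      obtain ⟨v, hv⟩ := exists_pred h c u ⟨m, hlt, hcu⟩
      by_cases hvm : v = m
      · exact hvm ▸ Relation.TransGen.single hv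
      · have hvle : h m ≤ h v := hv.2.2 m hlt hcu
        have hvlt : h m < h v := lt_of_le_of_ne hvle (fun e => hvm (hinj e.symm))
        have hsub : (Finset.univ.filter (fun w => h w < h v)) ⊂
            (Finset.univ.filter (fun w => h w < h u)) := by
          constructor
          · intro x hx
            simp only [Finset.mem_filter, Finset.mem_univ, true_and] at hx ⊢
            exact hx.trans hv.1
          · intro hss
            have := hss (by simp [hv.1] : v ∈ Finset.univ.filter (fun w => h w < h u))
            simp at this
        have hc2 : (Finset.univ.filter (fun w => h w < h v)).card ≤ n := by
          have := Finset.card_lt_card hsub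
          omega
        exact (ih v hc2 hvlt).head hv
  intro u; exact key _ u le_rfl

/-- If `|S⁺(u)| ≤ k` and `|P⁺(u)| ≤ k` for all nodes `u`, then the CONE graph
is connected with diameter at most `2k`. -/
theorem cone_diameter {V : Type*} [Fintype V]
    (h c : V → ℝ) (hinj : Function.Injective h) (cinj : Function.Injective c)
    (k : ℕ)
    (hS : ∀ u : V, {t | Relation.TransGen (IsSucc h c) u t}.ncard ≤ k)
    (hP : ∀ u : V, {t | Relation.TransGen (IsPred h c) u t}.ncard ≤ k) :
    ∀ u v : V, (coneGraph h c).Reachable u v ∧ (coneGraph h c).dist u v ≤ 2 * k := by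
  intro u v
  by_cases huv : u = v
  · subst huv
    exact ⟨SimpleGraph.Reachable.refl u, by rw [SimpleGraph.dist_self]; exact Nat.zero_le _⟩
  -- k ≥ 1
  have hk : 1 ≤ k := by
    have step : ∀ a b : V, h a < h b → 1 ≤ k := by
      intro a b hab
      have hab' : a ≠ b := fun e => absurd (e ▸ hab) (lt_irrefl _)
      have hcab : c a ≠ c b := fun e => hab' (cinj e)
      rcases lt_or_gt_of_ne hcab with hc1 | hc1
      · obtain ⟨s, hs⟩ := exists_succ h c a ⟨b, hab, hc1⟩
        have : 0 < {t | Relation.TransGen (IsSucc h c) a t}.ncard :=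
          (Set.ncard_pos (Set.toFinite _)).mpr ⟨s, Relation.TransGen.single hs⟩
        have := hS a; omega
      · obtain ⟨s, hs⟩ := exists_pred h c b ⟨a, hab, hc1⟩
        have : 0 < {t | Relation.TransGen (IsPred h c) b t}.ncard :=
          (Set.ncard_pos (Set.toFinite _)).mpr ⟨s, Relation.TransGen.single hs⟩
        have := hP b; omega
    rcases lt_trichotomy (h u) (h v) with hl | he | hr
    · exact step u v hl
    · exact absurd (hinj he) huv
    · exact step v u hr
  -- max capacity node
  obtain ⟨m, -, hm⟩ := Finset.exists_max_image (Finset.univ : Finset V) c ⟨u, Finset.mem_univ u⟩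
  have hm' : ∀ w, c w ≤ c m := fun w => hm w (Finset.mem_univ w)
  have adjm : ∀ x, x ≠ m → (coneGraph h c).Adj x m := by
    intro x hx
    refine ⟨hx, ?_⟩
    rcases lt_trichotomy (h x) (h m) with hl | he | hr
    · exact Or.inl (chain_succ h c hinj cinj m hm' x hl)
    · exact absurd (hinj he) hx
    · exact Or.inr (Or.inr (Or.inl (chain_pred h c hinj cinj m hm' x hr)))
  by_cases hum : u = m
  · subst hum
    have ha := (adjm v (fun e => huv e.symm)).symm
    refine ⟨(SimpleGraph.Walk.cons ha SimpleGraph.Walk.nil).reachable,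
      le_trans (SimpleGraph.dist_le (SimpleGraph.Walk.cons ha SimpleGraph.Walk.nil)) ?_⟩
    simp only [SimpleGraph.Walk.length_cons, SimpleGraph.Walk.length_nil]; omega
  by_cases hvm : v = m
  · subst hvm
    have ha := adjm u huv
    refine ⟨(SimpleGraph.Walk.cons ha SimpleGraph.Walk.nil).reachable,
      le_trans (SimpleGraph.dist_le (SimpleGraph.Walk.cons ha SimpleGraph.Walk.nil)) ?_⟩
    simp only [SimpleGraph.Walk.length_cons, SimpleGraph.Walk.length_nil]; omega
  · have ha1 := adjm u hum
    have ha2 := (adjm v hvm).symm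
    refine ⟨(SimpleGraph.Walk.cons ha1 (SimpleGraph.Walk.cons ha2 SimpleGraph.Walk.nil)).reachable,
      le_trans (SimpleGraph.dist_le
        (SimpleGraph.Walk.cons ha1 (SimpleGraph.Walk.cons ha2 SimpleGraph.Walk.nil))) ?_⟩
    simp only [SimpleGraph.Walk.length_cons, SimpleGraph.Walk.length_nil]; omega
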